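/- Let M > 0 and q ∈ (0,1) be given constants, and let (τ_k) ⊂ (0,1) be a sequence satisfying τ_{k+1} ≤ τ_k + M·qᵏ·τ_k·τ_{k+1} for all k ≥ 0. Then, for every k ≥ 0 such that 1 − q − τ₀M(1 − qᵏ) > 0, one has τ_k ≤ τ₀(1 − q)/(1 − q − τ₀M(1 − qᵏ)) and 1 − τ_k ≥ ((1 − τ₀)(1 − q) − τ₀M + τ₀Mqᵏ)/(1 − q − τ₀M(1 − qᵏ)). -/

import Mathlib

open Set

/-- Lemma: explicit bounds for a sequence `τ_k ⊂ (0,1)` satisfying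
`τ_{k+1} ≤ τ_k + M qᵏ τ_k τ_{k+1}`. -/
theorem stmt_4 (M q : ℝ) (τ : ℕ → ℝ)
    (hM : 0 < M) (hq : q ∈ Ioo (0 : ℝ) 1)
    (hτ : ∀ k : ℕ, τ k ∈ Ioo (0 : ℝ) 1)
    (hrec : ∀ k : ℕ, τ (k + 1) ≤ τ k + M * q ^ k * τ k * τ (k + 1)) :
    ∀ k : ℕ, 0 < 1 - q - τ 0 * M * (1 - q ^ k) →
      τ k ≤ τ 0 * (1 - q) / (1 - q - τ 0 * M * (1 - q ^ k)) ∧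
      ((1 - τ 0) * (1 - q) - τ 0 * M + τ 0 * M * q ^ k) /
          (1 - q - τ 0 * M * (1 - q ^ k)) ≤ 1 - τ k := by
  obtain ⟨hq0, hq1⟩ := hq
  have hq1' : (0:ℝ) < 1 - q := by linarith
  have hτ0 := hτ 0
  have key : ∀ k : ℕ, 1 / τ 0 - M * (1 - q ^ k) / (1 - q) ≤ 1 / τ k := by
    intro k
    induction k with
    | zero => norm_num
    | succ k ih =>
      obtain ⟨hka, hkb⟩ := hτ k
      obtain ⟨hk1a, hk1b⟩ := hτ (k + 1)
      have h1 : 0 ≤ 1 / τ (k + 1) + M * q ^ k - 1 / τ k := by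
        have heq : 1 / τ (k + 1) + M * q ^ k - 1 / τ k =
            (τ k + M * q ^ k * τ k * τ (k + 1) - τ (k + 1)) / (τ k * τ (k + 1)) := by
          field_simp
        rw [heq]
        exact div_nonneg (by linarith [hrec k]) (by positivity)
      have h2 : M * (1 - q ^ (k + 1)) / (1 - q) = M * (1 - q ^ k) / (1 - q) + M * q ^ k := by
        rw [div_add' _ _ _ hq1'.ne', pow_succ]
        ring_nf
      linarith
  intro k hD
  obtain ⟨hka, hkb⟩ := hτ k
  have hτ0a := hτ0.1
  have hpos : (0:ℝ) < τ 0 * (1 - q) := mul_pos hτ0a hq1'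
  have hinv := key k
  have heq : 1 / τ 0 - M * (1 - q ^ k) / (1 - q) =
      (1 - q - τ 0 * M * (1 - q ^ k)) / (τ 0 * (1 - q)) := by
    field_simp
  rw [heq] at hinv
  have h3 : (1 - q - τ 0 * M * (1 - q ^ k)) * τ k ≤ 1 * (τ 0 * (1 - q)) :=
    (div_le_div_iff₀ hpos hka).mp hinv
  have h4 : τ k ≤ τ 0 * (1 - q) / (1 - q - τ 0 * M * (1 - q ^ k)) := by
    rw [le_div_iff₀ hD]
    linarith
  refine ⟨h4, ?_⟩
  have h5 : ((1 - τ 0) * (1 - q) - τ 0 * M + τ 0 * M * q ^ k) /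
      (1 - q - τ 0 * M * (1 - q ^ k)) =
      1 - τ 0 * (1 - q) / (1 - q - τ 0 * M * (1 - q ^ k)) := by
    rw [eq_sub_iff_add_eq, ← add_div, div_eq_one_iff_eq hD.ne']
    ring
  rw [h5]
  linarith
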